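/- Sequential composition is in general not associative: if A contains at least two distinct atoms, then there exist programs P, Q, R over A such that (P ∘ Q) ∘ R ≠ P ∘ (Q ∘ R). -/

import Mathlib

/-- A rule `h ← B` over the alphabet `A`: a head atom paired with a finite body. -/
abbrev Rule (A : Type*) := A × Finset A

/-- The heads `h(S)` of a set of rules. -/
def heads {A : Type*} [DecidableEq A] (S : Finset (Rule A)) : Finset A := S.image Prod.fst

/-- The bodies `b(S)` of a set of rules. -/
def bodies {A : Type*} [DecidableEq A] (S : Finset (Rule A)) : Finset A := S.biUnion Prod.snd

/-- Sequential composition: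
`P ∘ R = { h(r) ← b(S) : r ∈ P, S ⊆ R, |S| ≤ sz(r), h(S) = b(r) }`. -/
def comp {A : Type*} [DecidableEq A] (P R : Finset (Rule A)) : Finset (Rule A) :=
  P.biUnion fun r =>
    (R.powerset.filter fun S => S.card ≤ r.2.card ∧ heads S = r.2).image
      fun S => (r.1, bodies S)

/-- Sequential composition is in general not associative: if `A` contains at least two
distinct atoms, then there are programs `P, Q, R` with `(P ∘ Q) ∘ R ≠ P ∘ (Q ∘ R)`. -/
def ruleEmb {A₀ A : Type*} (e : A₀ ↪ A) : Rule A₀ ↪ Rule A :=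
  ⟨fun r => (e r.1, r.2.map e), by
    rintro ⟨h₁, b₁⟩ ⟨h₂, b₂⟩ hr
    simp only [Prod.mk.injEq] at hr
    exact Prod.ext (e.injective hr.1) (Finset.map_injective e hr.2)⟩

lemma ruleEmb_apply {A₀ A : Type*} (e : A₀ ↪ A) (r : Rule A₀) :
    ruleEmb e r = (e r.1, r.2.map e) := rfl

lemma heads_map {A₀ A : Type*} [DecidableEq A₀] [DecidableEq A] (e : A₀ ↪ A)
    (S : Finset (Rule A₀)) : heads (S.map (ruleEmb e)) = (heads S).map e := by
  ext x
  simp [heads, ruleEmb_apply, Finset.mem_map]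

lemma bodies_map {A₀ A : Type*} [DecidableEq A₀] [DecidableEq A] (e : A₀ ↪ A)
    (S : Finset (Rule A₀)) : bodies (S.map (ruleEmb e)) = (bodies S).map e := by
  ext x
  simp [bodies, ruleEmb_apply, Finset.mem_map, Finset.mem_biUnion]
  aesop

lemma mem_comp {A : Type*} [DecidableEq A] {P R : Finset (Rule A)} {x : Rule A} :
    x ∈ comp P R ↔ ∃ r ∈ P, ∃ S, S ⊆ R ∧ S.card ≤ r.2.card ∧ heads S = r.2 ∧
      x = (r.1, bodies S) := by
  simp [comp, Finset.mem_biUnion, Finset.mem_image, Finset.mem_filter, Finset.mem_powerset]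
  aesop

lemma comp_map {A₀ A : Type*} [DecidableEq A₀] [DecidableEq A] (e : A₀ ↪ A)
    (P R : Finset (Rule A₀)) :
    comp (P.map (ruleEmb e)) (R.map (ruleEmb e)) = (comp P R).map (ruleEmb e) := by
  ext x
  rw [mem_comp]
  constructor
  · rintro ⟨r, hr, S, hSR, hcard, hheads, rfl⟩
    rw [Finset.mem_map] at hr
    obtain ⟨r₀, hr₀, rfl⟩ := hr
    rw [Finset.subset_map_iff] at hSR
    obtain ⟨S₀, hS₀R, rfl⟩ := hSR
    rw [Finset.mem_map]
    refine ⟨(r₀.1, bodies S₀), ?_, ?_⟩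
    · rw [mem_comp]
      refine ⟨r₀, hr₀, S₀, hS₀R, ?_, ?_, rfl⟩
      · simpa [ruleEmb_apply] using hcard
      · rw [heads_map] at hheads
        exact Finset.map_injective e (by simpa [ruleEmb_apply] using hheads)
    · rw [bodies_map]; rfl
  · intro hx
    rw [Finset.mem_map] at hx
    obtain ⟨y, hy, rfl⟩ := hx
    rw [mem_comp] at hy
    obtain ⟨r₀, hr₀, S₀, hS₀R, hcard, hheads, rfl⟩ := hy
    refine ⟨ruleEmb e r₀, Finset.mem_map_of_mem _ hr₀, S₀.map (ruleEmb e),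
      Finset.map_subset_map.mpr hS₀R, ?_, ?_, ?_⟩
    · simpa [ruleEmb_apply] using hcard
    · rw [heads_map, hheads]; rfl
    · rw [bodies_map]; rfl


lemma bool_cex : comp (comp ({(false, {false, true})} : Finset (Rule Bool))
      ({(false, {false}), (true, {false})})) ({(false, {false}), (false, {true})}) ≠
    comp ({(false, {false, true})} : Finset (Rule Bool))
      (comp ({(false, {false}), (true, {false})}) ({(false, {false}), (false, {true})})) := by
  decide

theorem comp_not_assoc {A : Type*} [DecidableEq A] [Fintype A]
    (h : ∃ a b : A, a ≠ b) :
    ∃ P Q R : Finset (Rule A), comp (comp P Q) R ≠ comp P (comp Q R) := by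
  obtain ⟨a, b, hab⟩ := h
  have einj : Function.Injective (fun x : Bool => bif x then b else a) := by
    intro x y hxy
    cases x <;> cases y <;> simp_all
  let e : Bool ↪ A := ⟨_, einj⟩
  refine ⟨Finset.map (ruleEmb e) {(false, {false, true})},
    Finset.map (ruleEmb e) {(false, {false}), (true, {false})},
    Finset.map (ruleEmb e) {(false, {false}), (false, {true})}, ?_⟩
  rw [_root_.comp_map, _root_.comp_map, _root_.comp_map, _root_.comp_map]
  intro hcontra
  exact bool_cex (Finset.map_injective (ruleEmb e) hcontra)
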